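/- For every c.e. subset A of ℕ, there exists a generating set for D(A) that is of Type n for some n with 1 ≤ n ≤ 10. -/

import Mathlib

open Set Function

/-- A set of naturals is computably enumerable (c.e.) -/
def CESet (A : Set ℕ) : Prop := REPred (· ∈ A)

/-- A set of naturals is computable -/
def ComputableSet (A : Set ℕ) : Prop := ComputablePred (· ∈ A)

/-- X ⊆* Y : X is almost contained in Y -/
def SubsetStar (X Y : Set ℕ) : Prop := (X \ Y).Finite

/-- X =* Y : X and Y differ by a finite set -/
def EqStar (X Y : Set ℕ) : Prop := (X \ Y).Finite ∧ (Y \ X).Finite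

/-- G is a generating set for 𝒟(A): a countable family of c.e. sets, each disjoint
from A, such that every c.e. set disjoint from A is almost covered by finitely many
members of G. -/
def Generates (A : Set ℕ) (G : Set (Set ℕ)) : Prop :=
  G.Countable ∧ (∀ X ∈ G, CESet X) ∧ (∀ X ∈ G, Disjoint X A) ∧
  ∀ D : Set ℕ, CESet D → Disjoint D A →
    ∃ F : Set (Set ℕ), F ⊆ G ∧ F.Finite ∧ SubsetStar D (⋃₀ F)

/-- S is simple -/
def SimpleSet (S : Set ℕ) : Prop :=
  CESet S ∧ Sᶜ.Infinite ∧ ∀ W : Set ℕ, CESet W → Disjoint W S → W.Finite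

/-- A is 𝒟-maximal -/
def DMaximal (A : Set ℕ) : Prop :=
  CESet A ∧ ∀ W : Set ℕ, CESet W → ∃ D : Set ℕ, CESet D ∧ Disjoint D A ∧
    (SubsetStar W (A ∪ D) ∨ EqStar (W ∪ A ∪ D) Set.univ)

/-- M is r-maximal -/
def RMaximal (M : Set ℕ) : Prop :=
  CESet M ∧ Mᶜ.Infinite ∧
    ∀ R : Set ℕ, ComputableSet R → (R ∩ Mᶜ).Finite ∨ (Rᶜ ∩ Mᶜ).Finite

/-- M is maximal -/
def MaximalSet (M : Set ℕ) : Prop :=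
  CESet M ∧ Mᶜ.Infinite ∧
    ∀ W : Set ℕ, CESet W → M ⊆ W → (W \ M).Finite ∨ Wᶜ.Finite

/-- B is atomless -/
def AtomlessSet (B : Set ℕ) : Prop :=
  ∀ C : Set ℕ, CESet C → B ⊆ C → Cᶜ.Infinite →
    ∃ E : Set ℕ, CESet E ∧ SubsetStar C E ∧ (E \ C).Infinite ∧ Eᶜ.Infinite

/-- A0, A1 form a Friedberg splitting of A -/
def FriedbergSplitting (A0 A1 A : Set ℕ) : Prop :=
  CESet A0 ∧ CESet A1 ∧ Disjoint A0 A1 ∧ A0 ∪ A1 = A ∧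
    ∀ W : Set ℕ, CESet W → ¬ CESet (W \ A) → ¬ CESet (W \ A0) ∧ ¬ CESet (W \ A1)

/-- E is a major subset of D -/
def MajorIn (E D : Set ℕ) : Prop :=
  CESet E ∧ CESet D ∧ E ⊆ D ∧ (D \ E).Infinite ∧
    ∀ W : Set ℕ, CESet W → SubsetStar Dᶜ W → SubsetStar Eᶜ W

/-- H is hh-simple: the lattice of c.e. supersets of H mod finite is a boolean algebra -/
def HHSimple (H : Set ℕ) : Prop :=
  CESet H ∧ Hᶜ.Infinite ∧
    ∀ W : Set ℕ, CESet W → ∃ V : Set ℕ, CESet V ∧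
      EqStar ((W ∪ H) ∩ (V ∪ H)) H ∧ EqStar (W ∪ V ∪ H) Set.univ

/-- A is strongly r-separable -/
def StronglyRSeparable (A : Set ℕ) : Prop :=
  ∀ B : Set ℕ, CESet B → Disjoint B A →
    ∃ C : Set ℕ, ComputableSet C ∧ B ⊆ C ∧ Disjoint C A ∧ (C \ B).Infinite

/-- Structure of a Type 5 generating family: D0 together with the R_i. -/
def Type5Family (D0 : Set ℕ) (R : ℕ → Set ℕ) : Prop :=
  CESet D0 ∧ ¬ ComputableSet D0 ∧ D0.Infinite ∧
  Function.Injective R ∧ (∀ i, D0 ≠ R i) ∧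
  (∀ i, ComputableSet (R i) ∧ (R i).Infinite) ∧
  Pairwise (Function.onFun Disjoint R) ∧
  (∀ i, Disjoint D0 (R i))

/-- Structure of a Type 7 generating family: D0 together with the R_i. -/
def Type7Family (D0 : Set ℕ) (R : ℕ → Set ℕ) : Prop :=
  CESet D0 ∧ ¬ ComputableSet D0 ∧
  Function.Injective R ∧ (∀ i, D0 ≠ R i) ∧
  (∀ i, ComputableSet (R i) ∧ (R i).Infinite) ∧
  Pairwise (Function.onFun Disjoint R) ∧
  {i : ℕ | (D0 ∩ R i).Nonempty}.Infinite

/-- Structure of a Type 8 generating family: the D_i together with the R_i. -/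
def Type8Family (D R : ℕ → Set ℕ) : Prop :=
  Function.Injective D ∧ Function.Injective R ∧ (∀ i j, D i ≠ R j) ∧
  (∀ i, CESet (D i) ∧ ¬ ComputableSet (D i)) ∧
  Pairwise (Function.onFun Disjoint D) ∧
  (∀ i, ComputableSet (R i) ∧ (R i).Infinite) ∧
  Pairwise (Function.onFun Disjoint R)

/-- Structure of a Type 9 generating family: the nested D_i together with the R_i. -/
def Type9Family (D R : ℕ → Set ℕ) : Prop :=
  Function.Injective R ∧ (∀ i j, D i ≠ R j) ∧
  (∀ i, ComputableSet (R i) ∧ (R i).Infinite) ∧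
  Pairwise (Function.onFun Disjoint R) ∧
  (∀ i, CESet (D i) ∧ ¬ ComputableSet (D i) ∧ (D i).Infinite) ∧
  (∀ l, D l ⊆ D (l + 1)) ∧
  (∀ l, ¬ CESet (D (l + 1) \ D l)) ∧
  (∀ l, {j : ℕ | (R j \ D l).Infinite}.Infinite)

def IsType1 (G : Set (Set ℕ)) : Prop := G = {∅}

def IsType2 (G : Set (Set ℕ)) : Prop :=
  ∃ R : Set ℕ, G = {R} ∧ ComputableSet R ∧ R.Infinite

def IsType3 (G : Set (Set ℕ)) : Prop :=
  ∃ W : Set ℕ, G = {W} ∧ CESet W ∧ ¬ ComputableSet W ∧ W.Infinite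

def IsType4 (G : Set (Set ℕ)) : Prop :=
  ∃ R : ℕ → Set ℕ, G = Set.range R ∧ Function.Injective R ∧
    (∀ i, ComputableSet (R i) ∧ (R i).Infinite) ∧
    Pairwise (Function.onFun Disjoint R)

def IsType5 (G : Set (Set ℕ)) : Prop :=
  ∃ (D0 : Set ℕ) (R : ℕ → Set ℕ), G = insert D0 (Set.range R) ∧ Type5Family D0 R

def IsType6 (G : Set (Set ℕ)) : Prop :=
  ∃ D : ℕ → Set ℕ, G = Set.range D ∧ Function.Injective D ∧
    (∀ i, CESet (D i) ∧ ¬ ComputableSet (D i) ∧ (D i).Infinite) ∧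
    Pairwise (Function.onFun Disjoint D)

def IsType7 (G : Set (Set ℕ)) : Prop :=
  ∃ (D0 : Set ℕ) (R : ℕ → Set ℕ), G = insert D0 (Set.range R) ∧ Type7Family D0 R

def IsType8 (G : Set (Set ℕ)) : Prop :=
  ∃ D R : ℕ → Set ℕ, G = Set.range D ∪ Set.range R ∧ Type8Family D R

def IsType9 (G : Set (Set ℕ)) : Prop :=
  ∃ D R : ℕ → Set ℕ, G = Set.range D ∪ Set.range R ∧ Type9Family D R

def IsType10 (G : Set (Set ℕ)) : Prop :=
  ∃ D : ℕ → Set ℕ, G = Set.range D ∧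
    (∀ i, CESet (D i) ∧ ¬ ComputableSet (D i) ∧ (D i).Infinite) ∧
    (∀ l, D l ⊆ D (l + 1)) ∧
    (∀ l, ¬ CESet (D (l + 1) \ D l))

/-- G is a generating set of Type n (n = 1, …, 10). -/
def GenTypeN (n : ℕ) (G : Set (Set ℕ)) : Prop :=
  match n with
  | 1 => IsType1 G
  | 2 => IsType2 G
  | 3 => IsType3 G
  | 4 => IsType4 G
  | 5 => IsType5 G
  | 6 => IsType6 G
  | 7 => IsType7 G
  | 8 => IsType8 G
  | 9 => IsType9 G
  | 10 => IsType10 G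
  | _ => False

/-- The c.e. set A is of Type n: 𝒟(A) has a generating set of Type n
but no generating set of any Type m < n. -/
def SetOfType (A : Set ℕ) (n : ℕ) : Prop :=
  (∃ G : Set (Set ℕ), Generates A G ∧ GenTypeN n G) ∧
  ∀ m : ℕ, m < n → ¬ ∃ G : Set (Set ℕ), Generates A G ∧ GenTypeN m G

/-- (F_i) is an A-special list. -/
def ASpecialList (A : Set ℕ) (F : ℕ → Set ℕ) : Prop :=
  F 0 = A ∧ (∀ i, CESet (F i) ∧ ¬ ComputableSet (F i)) ∧
  Pairwise (Function.onFun Disjoint F) ∧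
  ∀ W : Set ℕ, CESet W → ∃ i : ℕ,
    SubsetStar W (⋃ l ≤ i, F l) ∨ EqStar (W ∪ ⋃ l ≤ i, F l) Set.univ


-- basic computable closures
theorem compPred_and {p q : ℕ → Prop} (hp : ComputablePred p) (hq : ComputablePred q) :
    ComputablePred fun a => p a ∧ q a := by
  obtain ⟨f, hf, rfl⟩ := ComputablePred.computable_iff.1 hp
  obtain ⟨g, hg, rfl⟩ := ComputablePred.computable_iff.1 hq
  exact ComputablePred.computable_iff.2 ⟨fun a => (f a && g a), 
    (Computable.cond hf hg (Computable.const false)).of_eq (fun a => by cases f a <;> simp),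
    by funext a; simp [Bool.and_eq_true]⟩

theorem compSet_inter {X Y : Set ℕ} (hX : ComputableSet X) (hY : ComputableSet Y) :
    ComputableSet (X ∩ Y) := compPred_and hX hY

theorem compSet_compl {X : Set ℕ} (hX : ComputableSet X) : ComputableSet Xᶜ := hX.not

theorem compSet_union {X Y : Set ℕ} (hX : ComputableSet X) (hY : ComputableSet Y) :
    ComputableSet (X ∪ Y) := by
  have := (compSet_inter (compSet_compl hX) (compSet_compl hY)).not
  exact this.of_eq (fun a => by simp [Set.mem_union, Set.mem_inter_iff, or_iff_not_and_not])

theorem compSet_diff {X Y : Set ℕ} (hX : ComputableSet X) (hY : ComputableSet Y) :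
    ComputableSet (X \ Y) := compSet_inter hX (compSet_compl hY)

theorem compSet_singleton (a : ℕ) : ComputableSet ({a} : Set ℕ) := by
  refine ⟨by infer_instance, ?_⟩
  have : Computable fun n : ℕ => decide (n = a) :=
    Primrec.to_comp (Primrec.eq.comp Primrec.id (Primrec.const a)).decide
  exact this.of_eq fun n => by simp [Set.mem_singleton_iff]

theorem compSet_finset (t : Finset ℕ) : ComputableSet (↑t : Set ℕ) := by
  classical
  induction t using Finset.induction_on with
  | empty => exact ⟨by infer_instance, by simpa using Computable.const false⟩
  | @insert a s _ ih =>
      have := compSet_union (compSet_singleton a) ih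
      exact this.of_eq fun n => by simp

theorem compSet_finite {X : Set ℕ} (hX : X.Finite) : ComputableSet X := by
  obtain ⟨t, rfl⟩ : ∃ t : Finset ℕ, ↑t = X := hX.exists_finset_coe
  exact compSet_finset t

theorem compSet_empty : ComputableSet (∅ : Set ℕ) := compSet_finite Set.finite_empty

theorem ceSet_of_comp {X : Set ℕ} (hX : ComputableSet X) : CESet X := hX.to_re

theorem ceSet_empty : CESet (∅ : Set ℕ) := ceSet_of_comp compSet_empty

theorem assert_unit_dom (p : Prop) : (Part.assert p fun _ => Part.some ()).Dom ↔ p := by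
  rw [Part.dom_iff_mem]
  constructor
  · rintro ⟨x, hx⟩; exact (Part.mem_assert_iff.1 hx).1
  · intro h; exact ⟨(), Part.mem_assert_iff.2 ⟨h, Part.mem_some _⟩⟩

theorem ceSet_union {X Y : Set ℕ} (hX : CESet X) (hY : CESet Y) : CESet (X ∪ Y) := by
  obtain ⟨k, hk, H⟩ := Partrec.merge' hX hY
  have : REPred fun a => (k a).Dom := hk.dom_re
  exact this.of_eq fun a => by
    rw [(H a).2]
    simp only [assert_unit_dom, Set.mem_union]

theorem ceSet_inter_comp {X C : Set ℕ} (hX : CESet X) (hC : ComputableSet C) :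
    CESet (X ∩ C) := by
  obtain ⟨f, hf, hfe⟩ := ComputablePred.computable_iff.1 hC
  have hpart : Partrec fun a : ℕ =>
      cond (f a) (Part.assert (a ∈ X) fun _ => Part.some ()) Part.none :=
    Partrec.cond hf hX Partrec.none
  refine hpart.dom_re.of_eq fun a => ?_
  have hfa : (a ∈ C) = (f a = true) := congrFun hfe a
  cases h : f a <;>
    simp [h, assert_unit_dom, Set.mem_inter_iff, hfa, Part.not_none_dom]

theorem ceSet_diff_comp {X C : Set ℕ} (hX : CESet X) (hC : ComputableSet C) :
    CESet (X \ C) := ceSet_inter_comp hX (compSet_compl hC)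

theorem ceSet_almost {X Y : Set ℕ} (hX : CESet X) (h1 : (X \ Y).Finite) (h2 : (Y \ X).Finite) :
    CESet Y := by
  have : Y = (X ∩ (X \ Y)ᶜ) ∪ (Y \ X) := by
    ext n; by_cases hx : n ∈ X <;> by_cases hy : n ∈ Y <;> simp [hx, hy]
  rw [this]
  exact ceSet_union (ceSet_inter_comp hX (compSet_compl (compSet_finite h1)))
    (ceSet_of_comp (compSet_finite h2))

theorem compSet_almost {X Y : Set ℕ} (hX : ComputableSet X) (h1 : (X \ Y).Finite)
    (h2 : (Y \ X).Finite) : ComputableSet Y := by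
  have : Y = (X ∩ (X \ Y)ᶜ) ∪ (Y \ X) := by
    ext n; by_cases hx : n ∈ X <;> by_cases hy : n ∈ Y <;> simp [hx, hy]
  rw [this]
  exact compSet_union (compSet_inter hX (compSet_compl (compSet_finite h1)))
    (compSet_finite h2)

theorem nonComp_infinite {X : Set ℕ} (hX : ¬ ComputableSet X) : X.Infinite := by
  by_contra h
  exact hX (compSet_finite (Set.not_infinite.1 h))

theorem nonComp_union_comp {D C : Set ℕ} (hD : ¬ ComputableSet D) (hC : ComputableSet C)
    (hdis : Disjoint D C) : ¬ ComputableSet (D ∪ C) := by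
  intro h
  apply hD
  have : D = (D ∪ C) ∩ Cᶜ := by
    rw [Set.union_inter_distrib_right]
    rw [Set.disjoint_iff_inter_eq_empty] at hdis
    ext n; constructor
    · intro hn
      by_cases hc : n ∈ C
      · exact absurd (Set.mem_inter hn hc) (by simp [hdis])
      · exact Or.inl ⟨hn, hc⟩
    · rintro (⟨hn, _⟩ | ⟨hn, hn'⟩); exact hn; exact absurd hn hn'
  rw [this]
  exact compSet_inter h (compSet_compl hC)

theorem ceSets_countable : {X : Set ℕ | CESet X}.Countable := by
  have : {X : Set ℕ | CESet X} ⊆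
      Set.range (fun c : Nat.Partrec.Code => {n : ℕ | (Nat.Partrec.Code.eval c n).Dom}) := by
    intro X hX
    have h2 : Partrec fun a : ℕ =>
        (Part.assert (a ∈ X) fun _ => Part.some ()).map (fun _ => (0 : ℕ)) :=
      Partrec.map hX ((Computable.const 0).comp Computable.fst).to₂
    obtain ⟨c, hc⟩ := Nat.Partrec.Code.exists_code.1 (Partrec.nat_iff.1 h2)
    refine ⟨c, ?_⟩
    ext n
    simp only [Set.mem_setOf_eq, hc]
    constructor
    · rintro h
      show n ∈ X
      obtain ⟨x, hx⟩ := Part.dom_iff_mem.1 h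
      obtain ⟨u, hu, -⟩ := Part.mem_map_iff _ |>.1 hx
      exact (Part.mem_assert_iff.1 hu).1
    · intro h
      exact Part.dom_iff_mem.2 ⟨0, Part.mem_map_iff _ |>.2 ⟨(), Part.mem_assert_iff.2 ⟨h, Part.mem_some _⟩, rfl⟩⟩
  exact Set.Countable.mono this (Set.countable_range _)

-- SubsetStar helpers
theorem sstar_of_subset {X Y : Set ℕ} (h : X ⊆ Y) : SubsetStar X Y := by
  have : X \ Y = ∅ := Set.diff_eq_empty.2 h
  rw [SubsetStar, this]; exact Set.finite_empty

theorem sstar_mono {X Y Z : Set ℕ} (h : SubsetStar X Y) (h2 : Y ⊆ Z) : SubsetStar X Z := by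
  refine Set.Finite.subset h ?_
  intro a ha
  exact ⟨ha.1, fun hy => ha.2 (h2 hy)⟩

theorem sstar_absorb {X Y W : Set ℕ} (h : SubsetStar X (Y ∪ W)) (hW : W.Finite) :
    SubsetStar X Y := by
  refine Set.Finite.subset (Set.Finite.union h hW) ?_
  intro a ha
  by_cases haw : a ∈ W
  · exact Or.inr haw
  · refine Or.inl ⟨ha.1, ?_⟩
    rintro (hy | hw)
    · exact ha.2 hy
    · exact haw hw

-- Finset unions
theorem ceSet_biUnion {Z : ℕ → Set ℕ} (s : Finset ℕ) (h : ∀ i ∈ s, CESet (Z i)) :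
    CESet (⋃ i ∈ s, Z i) := by
  classical
  induction s using Finset.induction_on with
  | empty => exact ceSet_empty.of_eq (fun a => by simp)
  | @insert a t ha ih =>
      have := ceSet_union (h a (Finset.mem_insert_self a t))
        (ih (fun i hi => h i (Finset.mem_insert_of_mem hi)))
      exact this.of_eq fun n => by simp [Finset.set_biUnion_insert]

theorem compSet_biUnion {Z : ℕ → Set ℕ} (s : Finset ℕ) (h : ∀ i ∈ s, ComputableSet (Z i)) :
    ComputableSet (⋃ i ∈ s, Z i) := by
  classical
  induction s using Finset.induction_on with
  | empty => exact compSet_empty.of_eq (fun a => by simp)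
  | @insert a t ha ih =>
      have := compSet_union (h a (Finset.mem_insert_self a t))
        (ih (fun i hi => h i (Finset.mem_insert_of_mem hi)))
      exact this.of_eq fun n => by simp [Finset.set_biUnion_insert]

theorem pairwise_disjoint_injective {W : ℕ → Set ℕ} (h : Pairwise (Function.onFun Disjoint W))
    (hne : ∀ i, (W i).Nonempty) : Function.Injective W := by
  intro i j hij
  by_contra hne'
  have := h hne'
  rw [Function.onFun, hij, Set.disjoint_iff_inter_eq_empty, Set.inter_self] at this
  exact (hne j).ne_empty this

-- choice engine
open scoped Classical in
noncomputable def pickSet (P : Set ℕ → Prop) : Set ℕ :=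
  if h : ∃ Z, P Z then h.choose else ∅

theorem pickSet_spec {P : Set ℕ → Prop} (h : ∃ Z, P Z) : P (pickSet P) := by
  rw [pickSet]
  rw [dif_pos h]
  exact h.choose_spec

noncomputable def iterPick (step : Set ℕ → ℕ → Set ℕ → Prop) (B : Set ℕ) : ℕ → Set ℕ × Set ℕ
  | 0 => (B, pickSet (step B 0))
  | (k+1) =>
      let X := (iterPick step B k).1 ∪ (iterPick step B k).2
      (X, pickSet (step X (k+1)))

theorem iterPick_fst_succ (step : Set ℕ → ℕ → Set ℕ → Prop) (B : Set ℕ) (k : ℕ) :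
    (iterPick step B (k+1)).1 = (iterPick step B k).1 ∪ (iterPick step B k).2 := rfl

theorem iterPick_snd (step : Set ℕ → ℕ → Set ℕ → Prop) (B : Set ℕ) (k : ℕ) :
    (iterPick step B k).2 = pickSet (step (iterPick step B k).1 k) := by
  cases k <;> rfl

theorem iterPick_fst_zero (step : Set ℕ → ℕ → Set ℕ → Prop) (B : Set ℕ) :
    (iterPick step B 0).1 = B := rfl

open Classical in
theorem clean (Z : ℕ → Set ℕ) (hdis : Pairwise (Function.onFun Disjoint Z))
    (hI : {i | (Z i).Infinite}.Infinite) :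
    ∃ Z' : ℕ → Set ℕ,
      (∀ j, (Z' j).Infinite) ∧
      Pairwise (Function.onFun Disjoint Z') ∧
      (∀ j, ∃ s : Finset ℕ, Z' j = ⋃ i ∈ s, Z i) ∧
      (∀ j, ∃ c : ℕ, Z c ⊆ Z' j ∧ (Z' j \ Z c).Finite) ∧
      (∀ k, (⋃ i ∈ Finset.range (k+1), Z i) ⊆ ⋃ j ∈ Finset.range (k+1), Z' j) := by
  set p := fun i => (Z i).Infinite with hp
  have hI' : (setOf p).Infinite := hI
  have hnm : ∀ j, (Z (Nat.nth p j)).Infinite := fun j => Nat.nth_mem_of_infinite hI' j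
  have hmono := Nat.nth_strictMono hI'
  have hle : ∀ j, j ≤ Nat.nth p j := fun j => hmono.le_apply
  have hne : ∀ i, ∃ j, i ≤ Nat.nth p j := fun i => ⟨i, hle i⟩
  set g := fun i => sInf {j | i ≤ Nat.nth p j} with hg
  have gspec : ∀ i, i ≤ Nat.nth p (g i) := fun i => Nat.sInf_mem (hne i)
  have gmin : ∀ i j, i ≤ Nat.nth p j → g i ≤ j := fun i j h => Nat.sInf_le h
  have g_nth : ∀ j, g (Nat.nth p j) = j := by
    intro j
    refine le_antisymm (gmin _ _ le_rfl) ?_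
    by_contra hlt
    push_neg at hlt
    have h1 := gspec (Nat.nth p j)
    have h2 : Nat.nth p (g (Nat.nth p j)) < Nat.nth p j := hmono hlt
    omega
  have g_surj_eq : ∀ i, p i → i = Nat.nth p (g i) := by
    intro i hi
    have hc : Nat.nth p (Nat.count p i) = i := Nat.nth_count hi
    have hgi : g i = Nat.count p i := by
      conv_lhs => rw [← hc]
      exact g_nth _
    rw [hgi, hc]
  set Z' := fun j => ⋃ i ∈ (Finset.range (Nat.nth p j + 1)).filter (fun i => g i = j), Z i with hZ'
  have mem_bucket : ∀ i j, i ∈ (Finset.range (Nat.nth p j + 1)).filter (fun i => g i = j) ↔ g i = j := by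
    intro i j
    simp only [Finset.mem_filter, Finset.mem_range, Nat.lt_succ_iff]
    constructor
    · exact fun h => h.2
    · intro h; exact ⟨h ▸ gspec i, h⟩
  have core_sub : ∀ j, Z (Nat.nth p j) ⊆ Z' j := by
    intro j
    exact Set.subset_biUnion_of_mem ((mem_bucket _ j).2 (g_nth j))
  refine ⟨Z', fun j => (hnm j).mono (core_sub j), ?_, fun j => ⟨_, rfl⟩, ?_, ?_⟩
  · intro j1 j2 hne12
    rw [Function.onFun, Set.disjoint_left]
    intro x hx1 hx2
    simp only [hZ', Set.mem_iUnion] at hx1 hx2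
    obtain ⟨i1, hi1, hxi1⟩ := hx1
    obtain ⟨i2, hi2, hxi2⟩ := hx2
    rw [mem_bucket] at hi1 hi2
    have : i1 ≠ i2 := fun h => hne12 (by rw [← hi1, h, hi2])
    exact (hdis this).le_bot ⟨hxi1, hxi2⟩
  · intro j
    refine ⟨Nat.nth p j, core_sub j, ?_⟩
    have hsub : Z' j \ Z (Nat.nth p j) ⊆
        ⋃ i ∈ ((Finset.range (Nat.nth p j + 1)).filter (fun i => g i = j)).filter
          (fun i => i ≠ Nat.nth p j), Z i := by
      intro x hx
      obtain ⟨hx1, hx2⟩ := hx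
      simp only [hZ', Set.mem_iUnion] at hx1 ⊢
      obtain ⟨i, hi, hxi⟩ := hx1
      refine ⟨i, Finset.mem_filter.2 ⟨hi, ?_⟩, hxi⟩
      intro hieq
      exact hx2 (hieq ▸ hxi)
    refine Set.Finite.subset (Set.Finite.biUnion (Finset.finite_toSet _) ?_) hsub
    intro i hi
    simp only [Finset.coe_filter, Set.mem_setOf_eq] at hi
    obtain ⟨hi1, hi2⟩ := hi
    rw [mem_bucket] at hi1
    rw [Set.not_infinite.symm]
    intro hinf
    exact hi2 (by rw [g_surj_eq i hinf, hi1])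
  · intro k x hx
    simp only [Set.mem_iUnion, Finset.mem_range, Nat.lt_succ_iff] at hx ⊢
    obtain ⟨i, hik, hxi⟩ := hx
    refine ⟨g i, gmin i k (le_trans hik (hle k)), ?_⟩
    simp only [hZ', Set.mem_iUnion]
    exact ⟨i, (mem_bucket i (g i)).2 rfl, hxi⟩

theorem nonComp_union_comp' {C D : Set ℕ} (hD : ¬ ComputableSet D) (hC : ComputableSet C)
    (hdis : Disjoint C D) : ¬ ComputableSet (C ∪ D) := by
  intro h
  exact nonComp_union_comp hD hC hdis.symm (h.of_eq (fun a => by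
    rw [Set.union_comm]))

theorem absorbCore {A S : Set ℕ} (hS : CESet S) (hSA : Disjoint S A) (N : ℕ → Set ℕ)
    (hN : ∀ k, CESet (N k) ∧ ¬ ComputableSet (N k) ∧ Disjoint (N k) A)
    (hdis : Pairwise (Function.onFun Disjoint N))
    (hNS : ∀ k, Disjoint (N k) S) :
    ∃ D : ℕ → Set ℕ,
      (∀ k, CESet (D k) ∧ ¬ ComputableSet (D k) ∧ (D k).Infinite ∧ Disjoint (D k) A) ∧
      Pairwise (Function.onFun Disjoint D) ∧
      S ⊆ D 0 ∧ (∀ t, N t ⊆ ⋃ j ∈ Finset.range (t+2), D j) := by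
  have hinf : ∀ P : Set ℕ, ¬ ComputableSet P → P.Infinite := fun P h => nonComp_infinite h
  by_cases hc : ComputableSet (S ∪ N 0)
  · refine ⟨fun k => Nat.casesOn k (S ∪ N 0 ∪ N 1) (fun m => N (m+2)), ?_, ?_, ?_, ?_⟩
    · rintro (_ | k)
      · have hd : Disjoint (S ∪ N 0) (N 1) := by
          rw [Set.disjoint_union_left]
          exact ⟨(hNS 1).symm, (hdis (show (0:ℕ) ≠ 1 by decide))⟩
        have hnc : ¬ ComputableSet (S ∪ N 0 ∪ N 1) :=
          nonComp_union_comp' (hN 1).2.1 hc hd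
        refine ⟨ceSet_union (ceSet_union hS (hN 0).1) (hN 1).1, hnc, hinf _ hnc, ?_⟩
        show Disjoint (S ∪ N 0 ∪ N 1) A
        rw [Set.disjoint_union_left, Set.disjoint_union_left]
        exact ⟨⟨hSA, (hN 0).2.2⟩, (hN 1).2.2⟩
      · exact ⟨(hN (k+2)).1, (hN (k+2)).2.1, hinf _ (hN (k+2)).2.1, (hN (k+2)).2.2⟩
    · intro i j hij
      match i, j with
      | 0, 0 => exact absurd rfl hij
      | 0, (l+1) =>
          show Disjoint (S ∪ N 0 ∪ N 1) (N (l+2))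
          rw [Set.disjoint_union_left, Set.disjoint_union_left]
          exact ⟨⟨(hNS (l+2)).symm, hdis (by omega : (0:ℕ) ≠ l+2)⟩, hdis (by omega : (1:ℕ) ≠ l+2)⟩
      | (l+1), 0 =>
          show Disjoint (N (l+2)) (S ∪ N 0 ∪ N 1)
          rw [Set.disjoint_union_right, Set.disjoint_union_right]
          exact ⟨⟨hNS (l+2), hdis (by omega : l+2 ≠ (0:ℕ))⟩, hdis (by omega : l+2 ≠ (1:ℕ))⟩
      | (l+1), (m+1) =>
          exact hdis (by omega : l+2 ≠ m+2)
    · exact Set.subset_union_left.trans Set.subset_union_left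
    · rintro (_ | (_ | t))
      · intro x hx
        simp only [Set.mem_iUnion, Finset.mem_range]
        exact ⟨0, by omega, Or.inl (Or.inr hx)⟩
      · intro x hx
        simp only [Set.mem_iUnion, Finset.mem_range]
        exact ⟨0, by omega, Or.inr hx⟩
      · intro x hx
        simp only [Set.mem_iUnion, Finset.mem_range]
        exact ⟨t+1, by omega, hx⟩
  · refine ⟨fun k => Nat.casesOn k (S ∪ N 0) (fun m => N (m+1)), ?_, ?_, ?_, ?_⟩
    · rintro (_ | k)
      · refine ⟨ceSet_union hS (hN 0).1, hc, hinf _ hc, ?_⟩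
        show Disjoint (S ∪ N 0) A
        rw [Set.disjoint_union_left]
        exact ⟨hSA, (hN 0).2.2⟩
      · exact ⟨(hN (k+1)).1, (hN (k+1)).2.1, hinf _ (hN (k+1)).2.1, (hN (k+1)).2.2⟩
    · intro i j hij
      match i, j with
      | 0, 0 => exact absurd rfl hij
      | 0, (l+1) =>
          show Disjoint (S ∪ N 0) (N (l+1))
          rw [Set.disjoint_union_left]
          exact ⟨(hNS (l+1)).symm, hdis (by omega : (0:ℕ) ≠ l+1)⟩
      | (l+1), 0 =>
          show Disjoint (N (l+1)) (S ∪ N 0)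
          rw [Set.disjoint_union_right]
          exact ⟨hNS (l+1), hdis (by omega : l+1 ≠ (0:ℕ))⟩
      | (l+1), (m+1) =>
          exact hdis (by omega : l+1 ≠ m+1)
    · exact Set.subset_union_left
    · rintro (_ | t)
      · intro x hx
        simp only [Set.mem_iUnion, Finset.mem_range]
        exact ⟨0, by omega, Or.inr hx⟩
      · intro x hx
        simp only [Set.mem_iUnion, Finset.mem_range]
        exact ⟨t+1, by omega, hx⟩

theorem exists_enum (A : Set ℕ) : ∃ e : ℕ → Set ℕ,
    (∀ k, CESet (e k) ∧ Disjoint (e k) A) ∧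
    ∀ D : Set ℕ, CESet D → Disjoint D A → ∃ k, e k = D := by
  have hcnt : {X : Set ℕ | CESet X ∧ Disjoint X A}.Countable :=
    Set.Countable.mono (fun X hX => hX.1) ceSets_countable
  have hne : {X : Set ℕ | CESet X ∧ Disjoint X A}.Nonempty :=
    ⟨∅, ceSet_empty, Set.empty_disjoint A⟩
  obtain ⟨e, he⟩ := hcnt.exists_eq_range hne
  refine ⟨e, fun k => ?_, fun D hD hDA => ?_⟩
  · have : e k ∈ {X : Set ℕ | CESet X ∧ Disjoint X A} := he ▸ Set.mem_range_self k
    exact this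
  · have : D ∈ Set.range e := he ▸ (⟨hD, hDA⟩ : D ∈ {X : Set ℕ | CESet X ∧ Disjoint X A})
    obtain ⟨k, hk⟩ := this
    exact ⟨k, hk⟩

theorem partial_biUnion_eq (W : ℕ → Set ℕ) (k : ℕ) :
    ⋃ j ∈ Finset.range (k+1), (W j \ ⋃ i ∈ Finset.range j, W i) =
      ⋃ j ∈ Finset.range (k+1), W j := by
  apply Set.Subset.antisymm
  · refine Set.iUnion₂_subset fun j hj => ?_
    exact (Set.diff_subset).trans (Set.subset_biUnion_of_mem hj)
  · intro x hx
    simp only [Set.mem_iUnion, Finset.mem_range] at hx ⊢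
    obtain ⟨j, hjk, hxj⟩ := hx
    have hnex : ∃ i, x ∈ W i := ⟨j, hxj⟩
    set j0 := sInf {i | x ∈ W i} with hj0
    have hmem : x ∈ W j0 := Nat.sInf_mem hnex
    have hle : j0 ≤ j := Nat.sInf_le hxj
    refine ⟨j0, by omega, hmem, ?_⟩
    simp only [Set.mem_iUnion, Finset.mem_range]
    rintro ⟨i, hij, hxi⟩
    have h2 : j0 ≤ i := Nat.sInf_le hxi
    omega

theorem range_succ_biUnion (g : ℕ → Set ℕ) (k : ℕ) :
    ⋃ j ∈ Finset.range (k+1), g j = (⋃ j ∈ Finset.range k, g j) ∪ g k := by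
  rw [Finset.range_add_one, Finset.set_biUnion_insert, Set.union_comm]

theorem build_pieces {A B : Set ℕ} (e : ℕ → Set ℕ)
    (hBce : CESet B) (hBA : Disjoint B A)
    (key : ∀ X, CESet X → Disjoint X A → B ⊆ X → ∀ k, ∃ Z,
      (CESet Z ∧ Disjoint Z A) ∧ Disjoint Z X ∧ SubsetStar (e k) (X ∪ Z)) :
    ∃ Z : ℕ → Set ℕ, (∀ k, CESet (Z k) ∧ Disjoint (Z k) A) ∧
      Pairwise (Function.onFun Disjoint Z) ∧ (∀ k, Disjoint (Z k) B) ∧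
      ∀ k, SubsetStar (e k) (B ∪ ⋃ j ∈ Finset.range (k+1), Z j) := by
  set step : Set ℕ → ℕ → Set ℕ → Prop :=
    fun X k Z => (CESet Z ∧ Disjoint Z A) ∧ Disjoint Z X ∧ SubsetStar (e k) (X ∪ Z) with hstep
  set F := iterPick step B with hF
  have inv : ∀ k, (CESet (F k).1 ∧ Disjoint (F k).1 A ∧ B ⊆ (F k).1) ∧
      (F k).1 = B ∪ ⋃ j ∈ Finset.range k, (F j).2 := by
    intro k
    induction k with
    | zero =>
        refine ⟨⟨hBce, hBA, le_rfl⟩, ?_⟩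
        show B = B ∪ ⋃ j ∈ Finset.range 0, (F j).2
        simp
    | succ k ih =>
        have hpk : step (F k).1 k (F k).2 := by
          rw [show (F k).2 = pickSet (step (F k).1 k) from iterPick_snd step B k]
          exact pickSet_spec (key (F k).1 ih.1.1 ih.1.2.1 ih.1.2.2 k)
        have hfst : (F (k+1)).1 = (F k).1 ∪ (F k).2 := iterPick_fst_succ step B k
        refine ⟨⟨?_, ?_, ?_⟩, ?_⟩
        · rw [hfst]; exact ceSet_union ih.1.1 hpk.1.1
        · rw [hfst, Set.disjoint_union_left]; exact ⟨ih.1.2.1, hpk.1.2⟩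
        · rw [hfst]; exact ih.1.2.2.trans Set.subset_union_left
        · rw [hfst, ih.2, range_succ_biUnion, Set.union_assoc]
  have hpiece : ∀ k, step (F k).1 k (F k).2 := by
    intro k
    rw [show (F k).2 = pickSet (step (F k).1 k) from iterPick_snd step B k]
    exact pickSet_spec (key (F k).1 (inv k).1.1 (inv k).1.2.1 (inv k).1.2.2 k)
  have hsub : ∀ j k, j < k → (F j).2 ⊆ (F k).1 := by
    intro j k hjk
    rw [(inv k).2]
    intro x hx
    exact Or.inr (by
      simp only [Set.mem_iUnion, Finset.mem_range]
      exact ⟨j, hjk, hx⟩)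
  refine ⟨fun k => (F k).2, fun k => (hpiece k).1, ?_, ?_, ?_⟩
  · have key2 : ∀ j k, j < k → Disjoint (F j).2 (F k).2 := by
      intro j k hjk
      exact (Set.disjoint_of_subset_left (hsub j k hjk) (hpiece k).2.1.symm).symm.symm
    intro i j hij
    rcases lt_or_gt_of_ne hij with h | h
    · exact key2 i j h
    · exact (key2 j i h).symm
  · intro k
    have : B ⊆ (F k).1 := (inv k).1.2.2
    exact Set.disjoint_of_subset_right this (hpiece k).2.1
  · intro k
    have h1 := (hpiece k).2.2
    refine sstar_mono h1 ?_
    rw [(inv k).2, range_succ_biUnion]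
    intro x hx
    rcases hx with (hx | hx) | hx
    · exact Or.inl hx
    · exact Or.inr (Or.inl hx)
    · exact Or.inr (Or.inr hx)

def Stuck (A C : Set ℕ) : Prop :=
  CESet C ∧ Disjoint C A ∧ ∃ Y, CESet Y ∧ Disjoint Y A ∧
    ∀ Z, CESet Z → Disjoint Z A → Disjoint Z C → ¬ SubsetStar Y (C ∪ Z)

theorem stuck_noncomputable {A C : Set ℕ} (h : Stuck A C) : ¬ ComputableSet C := by
  intro hcomp
  obtain ⟨hce, hCA, Y, hYce, hYA, hY⟩ := h
  refine hY (Y ∩ Cᶜ) (ceSet_inter_comp hYce (compSet_compl hcomp))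
    (Set.disjoint_of_subset_left Set.inter_subset_left hYA)
    (Set.disjoint_left.2 fun a ha => ha.2) ?_
  refine sstar_of_subset fun a ha => ?_
  by_cases hc : a ∈ C
  · exact Or.inl hc
  · exact Or.inr ⟨ha, hc⟩

def PieceFam (A : Set ℕ) (e : ℕ → Set ℕ) : Prop :=
  ∃ X0, (CESet X0 ∧ Disjoint X0 A) ∧ ∃ Z : ℕ → Set ℕ,
    (∀ k, CESet (Z k) ∧ Disjoint (Z k) A) ∧ Pairwise (Function.onFun Disjoint Z) ∧
    (∀ k, Disjoint (Z k) X0) ∧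
    ∀ k, SubsetStar (e k) (X0 ∪ ⋃ j ∈ Finset.range (k+1), Z j)

theorem exists_stuck_above {A : Set ℕ} (e : ℕ → Set ℕ)
    (he1 : ∀ k, CESet (e k) ∧ Disjoint (e k) A)
    (hnp : ¬ PieceFam A e) {B : Set ℕ} (hBce : CESet B) (hBA : Disjoint B A) :
    ∃ C, B ⊆ C ∧ Stuck A C := by
  by_contra hno
  push_neg at hno
  apply hnp
  refine ⟨B, ⟨hBce, hBA⟩, ?_⟩
  have key : ∀ X, CESet X → Disjoint X A → B ⊆ X → ∀ k, ∃ Z,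
      (CESet Z ∧ Disjoint Z A) ∧ Disjoint Z X ∧ SubsetStar (e k) (X ∪ Z) := by
    intro X hXce hXA hBX k
    have hnstuck := hno X hBX
    rw [Stuck] at hnstuck
    push_neg at hnstuck
    obtain ⟨Z, hZce, hZA, hZX, hZ⟩ := hnstuck hXce hXA (e k) (he1 k).1 (he1 k).2
    exact ⟨Z, ⟨hZce, hZA⟩, hZX, hZ⟩
  obtain ⟨Z, h1, h2, h3, h4⟩ := build_pieces e hBce hBA key
  exact ⟨Z, h1, h2, h3, h4⟩

theorem typeTenChain {A : Set ℕ} (e : ℕ → Set ℕ)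
    (he1 : ∀ k, CESet (e k) ∧ Disjoint (e k) A)
    (hnp : ¬ PieceFam A e) :
    ∃ D : ℕ → Set ℕ,
      (∀ i, CESet (D i) ∧ Disjoint (D i) A ∧ ¬ ComputableSet (D i) ∧ (D i).Infinite) ∧
      (∀ l, D l ⊆ D (l+1)) ∧ (∀ l, ¬ CESet (D (l+1) \ D l)) ∧ ∀ k, e k ⊆ D k := by
  obtain ⟨C0, -, hC0⟩ := exists_stuck_above e he1 hnp ceSet_empty (Set.empty_disjoint A)
  set step : Set ℕ → ℕ → Set ℕ → Prop := fun X l C =>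
    Stuck A C ∧ X ⊆ C ∧ e l ⊆ C ∧ ∃ Y, (CESet Y ∧ Disjoint Y A ∧
      ∀ Z, CESet Z → Disjoint Z A → Disjoint Z X → ¬ SubsetStar Y (X ∪ Z)) ∧ Y ⊆ C
    with hstepdef
  have hstep : ∀ X l, Stuck A X → ∃ C, step X l C := by
    intro X l hX
    obtain ⟨hXce, hXA, Y, hYce, hYA, hY⟩ := hX
    obtain ⟨C, hsub, hCstuck⟩ := exists_stuck_above e he1 hnp
      (ceSet_union (ceSet_union hXce hYce) (he1 l).1)
      (by rw [Set.disjoint_union_left, Set.disjoint_union_left]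
          exact ⟨⟨hXA, hYA⟩, (he1 l).2⟩)
    refine ⟨C, hCstuck, ?_, ?_, ⟨Y, ⟨hYce, hYA, hY⟩, ?_⟩⟩
    · exact (Set.subset_union_left.trans Set.subset_union_left).trans hsub
    · exact Set.subset_union_right.trans hsub
    · exact (Set.subset_union_right.trans (Set.subset_union_left (s := X ∪ Y))).trans hsub
  set F := iterPick step C0 with hF
  have invStuck : ∀ k, Stuck A (F k).1 ∧ step (F k).1 k (F k).2 := by
    intro k
    induction k with
    | zero =>
        have h0 : (F 0).1 = C0 := rfl
        have hs : Stuck A (F 0).1 := h0 ▸ hC0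
        exact ⟨hs, by
          rw [show (F 0).2 = pickSet (step (F 0).1 0) from iterPick_snd step C0 0]
          exact pickSet_spec (hstep _ 0 hs)⟩
    | succ k ih =>
        have hfst : (F (k+1)).1 = (F k).1 ∪ (F k).2 := iterPick_fst_succ step C0 k
        have heq : (F (k+1)).1 = (F k).2 := by
          rw [hfst, Set.union_eq_self_of_subset_left ih.2.2.1]
        have hs : Stuck A (F (k+1)).1 := heq ▸ ih.2.1
        exact ⟨hs, by
          rw [show (F (k+1)).2 = pickSet (step (F (k+1)).1 (k+1)) from iterPick_snd step C0 (k+1)]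
          exact pickSet_spec (hstep _ (k+1) hs)⟩
  have heqD : ∀ k, (F (k+1)).1 = (F k).2 := by
    intro k
    rw [iterPick_fst_succ step C0 k, Set.union_eq_self_of_subset_left (invStuck k).2.2.1]
  refine ⟨fun l => (F l).2, ?_, ?_, ?_, ?_⟩
  · intro i
    have hs := (invStuck i).2.1
    exact ⟨hs.1, hs.2.1, stuck_noncomputable hs, nonComp_infinite (stuck_noncomputable hs)⟩
  · intro l
    have := (invStuck (l+1)).2.2.1
    rw [heqD l] at this
    exact this
  · intro l hce
    have hstep1 := (invStuck (l+1)).2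
    obtain ⟨hCstuck, hXC, hel, Y, ⟨hYce, hYA, hY⟩, hYC⟩ := hstep1
    rw [heqD l] at hY hXC
    have hZce : CESet ((F (l+1)).2 \ (F l).2) := hce
    refine hY ((F (l+1)).2 \ (F l).2) hZce ?_ ?_ ?_
    · exact Set.disjoint_of_subset_left (Set.diff_subset) (invStuck (l+1)).2.1.2.1
    · exact Set.disjoint_left.2 fun a ha => ha.2
    · refine sstar_of_subset fun a ha => ?_
      have haC : a ∈ (F (l+1)).2 := hYC ha
      by_cases hm : a ∈ (F l).2
      · exact Or.inl hm
      · exact Or.inr ⟨haC, hm⟩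
  · intro k
    exact (invStuck k).2.2.2.1



def CompCover (A X : Set ℕ) : Prop :=
  ∀ Y, CESet Y → Disjoint Y A → ∃ Z, CESet Z ∧ Disjoint Z A ∧ ComputableSet Z ∧
    SubsetStar Y (X ∪ Z)

theorem biUnion_disjoint {Z : ℕ → Set ℕ} {A : Set ℕ} (s : Finset ℕ)
    (h : ∀ i, Disjoint (Z i) A) : Disjoint (⋃ i ∈ s, Z i) A := by
  rw [Set.disjoint_left]
  intro a ha haA
  simp only [Set.mem_iUnion] at ha
  obtain ⟨i, _, hai⟩ := ha
  exact (h i).le_bot ⟨hai, haA⟩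

theorem many_infinite {A X0 : Set ℕ} (e : ℕ → Set ℕ)
    (he2 : ∀ D, CESet D → Disjoint D A → ∃ k, e k = D)
    (hnomax : ∀ M, CESet M → Disjoint M A → ∃ D, CESet D ∧ Disjoint D A ∧ ¬ SubsetStar D M)
    (Z : ℕ → Set ℕ) (hZ : ∀ k, CESet (Z k) ∧ Disjoint (Z k) A)
    (hX0ce : CESet X0) (hX0A : Disjoint X0 A)
    (hcov : ∀ k, SubsetStar (e k) (X0 ∪ ⋃ j ∈ Finset.range (k+1), Z j)) :
    {i | (Z i).Infinite}.Infinite := by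
  classical
  by_contra hfin
  rw [Set.not_infinite] at hfin
  set M := X0 ∪ ⋃ i ∈ hfin.toFinset, Z i with hM
  have hMce : CESet M := ceSet_union hX0ce (ceSet_biUnion _ (fun i _ => (hZ i).1))
  have hMA : Disjoint M A := by
    rw [Set.disjoint_union_left]
    exact ⟨hX0A, biUnion_disjoint _ (fun i => (hZ i).2)⟩
  obtain ⟨D, hDce, hDA, hDn⟩ := hnomax M hMce hMA
  obtain ⟨k, rfl⟩ := he2 D hDce hDA
  apply hDn
  have h1 := hcov k
  have h2 : (X0 ∪ ⋃ j ∈ Finset.range (k+1), Z j) \ M ⊆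
      ⋃ j ∈ (Finset.range (k+1)).filter (fun j => ¬ (Z j).Infinite), Z j := by
    rintro x ⟨hx1, hx2⟩
    rcases hx1 with hx1 | hx1
    · exact absurd (Or.inl hx1) hx2
    · simp only [Set.mem_iUnion, Finset.mem_range] at hx1
      obtain ⟨j, hjk, hxj⟩ := hx1
      by_cases hji : (Z j).Infinite
      · exact absurd (Or.inr (by
          simp only [Set.mem_iUnion]
          exact ⟨j, Set.Finite.mem_toFinset hfin |>.2 hji, hxj⟩)) hx2
      · simp only [Set.mem_iUnion, Finset.mem_filter, Finset.mem_range]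
        exact ⟨j, ⟨hjk, hji⟩, hxj⟩
  have h2fin : ((X0 ∪ ⋃ j ∈ Finset.range (k+1), Z j) \ M).Finite := by
    refine Set.Finite.subset (Set.Finite.biUnion (Finset.finite_toSet _) ?_) h2
    intro i hi
    simp only [Finset.coe_filter, Set.mem_setOf_eq, Finset.mem_range] at hi
    exact Set.not_infinite.1 hi.2
  refine Set.Finite.subset (Set.Finite.union h1 h2fin) ?_
  intro a ⟨ha1, ha2⟩
  by_cases hc : a ∈ X0 ∪ ⋃ j ∈ Finset.range (k+1), Z j
  · exact Or.inr ⟨hc, ha2⟩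
  · exact Or.inl ⟨ha1, hc⟩


theorem typesSixEight {A : Set ℕ} (e : ℕ → Set ℕ)
    (he1 : ∀ k, CESet (e k) ∧ Disjoint (e k) A)
    (he2 : ∀ D, CESet D → Disjoint D A → ∃ k, e k = D)
    (hnomax : ∀ M, CESet M → Disjoint M A → ∃ D, CESet D ∧ Disjoint D A ∧ ¬ SubsetStar D M)
    (hns1 : ∀ X, CESet X → Disjoint X A → ¬ CompCover A X)
    (hpf : PieceFam A e) :
    ∃ G, Generates A G ∧ (GenTypeN 6 G ∨ GenTypeN 8 G) := by
  classical
  obtain ⟨X0, ⟨hX0ce, hX0A⟩, Z, hZ, hZdis, hZX0, hZcov⟩ := hpf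
  have hI : {i | (Z i).Infinite}.Infinite := many_infinite e he2 hnomax Z hZ hX0ce hX0A hZcov
  obtain ⟨P, hPinf, hPdis, hPfin, -, hPcov⟩ := clean Z hZdis hI
  have hPce : ∀ j, CESet (P j) := fun j => by
    obtain ⟨s, hs⟩ := hPfin j; rw [hs]; exact ceSet_biUnion _ (fun i _ => (hZ i).1)
  have hPA : ∀ j, Disjoint (P j) A := fun j => by
    obtain ⟨s, hs⟩ := hPfin j; rw [hs]; exact biUnion_disjoint _ (fun i => (hZ i).2)
  have hPX0 : ∀ j, Disjoint (P j) X0 := fun j => by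
    obtain ⟨s, hs⟩ := hPfin j; rw [hs]; exact biUnion_disjoint _ (fun i => hZX0 i)
  have hcov : ∀ k, SubsetStar (e k) (X0 ∪ ⋃ j ∈ Finset.range (k+1), P j) := fun k =>
    sstar_mono (hZcov k) (Set.union_subset_union_right X0 (hPcov k))
  set NC := fun j => ¬ ComputableSet (P j) with hNCdef
  have hNCinf : (setOf NC).Infinite := by
    by_contra hfin
    rw [Set.not_infinite] at hfin
    set S := X0 ∪ ⋃ j ∈ hfin.toFinset, P j with hSdef
    have hSce : CESet S := ceSet_union hX0ce (ceSet_biUnion _ (fun i _ => hPce i))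
    have hSA : Disjoint S A := by
      rw [Set.disjoint_union_left]
      exact ⟨hX0A, biUnion_disjoint _ (fun i => hPA i)⟩
    refine hns1 S hSce hSA ?_
    intro Y hYce hYA
    obtain ⟨k, rfl⟩ := he2 Y hYce hYA
    set W := ⋃ j ∈ (Finset.range (k+1)).filter (fun j => ComputableSet (P j)), P j with hWdef
    have hWcomp : ComputableSet W := compSet_biUnion _ (fun i hi => (Finset.mem_filter.1 hi).2)
    refine ⟨W, ceSet_of_comp hWcomp, biUnion_disjoint _ (fun i => hPA i), hWcomp, ?_⟩
    refine sstar_mono (hcov k) ?_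
    intro x hx
    rcases hx with hx | hx
    · exact Or.inl (Or.inl hx)
    · simp only [Set.mem_iUnion, Finset.mem_range] at hx
      obtain ⟨j, hjk, hxj⟩ := hx
      by_cases hcj : ComputableSet (P j)
      · refine Or.inr ?_
        simp only [hWdef, Set.mem_iUnion, Finset.mem_filter, Finset.mem_range]
        exact ⟨j, ⟨hjk, hcj⟩, hxj⟩
      · refine Or.inl (Or.inr ?_)
        simp only [Set.mem_iUnion]
        exact ⟨j, (Set.Finite.mem_toFinset hfin).2 hcj, hxj⟩
  set cp := fun j => ComputableSet (P j) with hcpdef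
  have hNCnth : ∀ t, ¬ ComputableSet (P (Nat.nth NC t)) := fun t => Nat.nth_mem_of_infinite hNCinf t
  have hNdis : Pairwise (Function.onFun Disjoint (fun t => P (Nat.nth NC t))) :=
    fun i j hij => hPdis ((Nat.nth_injective hNCinf).ne hij)
  by_cases hCinf : (setOf cp).Infinite
  · -- Type 8
    set N := fun t => P (Nat.nth NC t) with hNdef
    have hN : ∀ t, CESet (N t) ∧ ¬ ComputableSet (N t) ∧ Disjoint (N t) A :=
      fun t => ⟨hPce _, hNCnth t, hPA _⟩
    have hNS : ∀ t, Disjoint (N t) X0 := fun t => hPX0 _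
    obtain ⟨D, hD, hDdis, hX0D, hND⟩ := absorbCore hX0ce hX0A N hN hNdis hNS
    have hCnth : ∀ c, ComputableSet (P (Nat.nth cp c)) := fun c => Nat.nth_mem_of_infinite hCinf c
    set R := fun c => P (Nat.nth cp c) with hRdef
    have hRdis : Pairwise (Function.onFun Disjoint R) :=
      fun i j hij => hPdis ((Nat.nth_injective hCinf).ne hij)
    refine ⟨Set.range D ∪ Set.range R, ⟨?_, ?_, ?_, ?_⟩, Or.inr ?_⟩
    · exact (Set.countable_range D).union (Set.countable_range R)
    · rintro X (⟨i, rfl⟩ | ⟨c, rfl⟩)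
      · exact (hD i).1
      · exact ceSet_of_comp (hCnth c)
    · rintro X (⟨i, rfl⟩ | ⟨c, rfl⟩)
      · exact (hD i).2.2.2
      · exact hPA _
    · intro Dd hDce hDA
      obtain ⟨k, rfl⟩ := he2 Dd hDce hDA
      refine ⟨(D '' {i | i < k + 3}) ∪ (R '' {c | c < k + 1}), ?_, ?_, ?_⟩
      · rintro X (⟨i, -, rfl⟩ | ⟨c, -, rfl⟩)
        · exact Or.inl (Set.mem_range_self i)
        · exact Or.inr (Set.mem_range_self c)
      · exact ((Set.finite_Iio _).image D).union ((Set.finite_Iio _).image R)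
      · refine sstar_mono (hcov k) ?_
        intro x hx
        rw [Set.mem_sUnion]
        rcases hx with hx | hx
        · exact ⟨D 0, Or.inl ⟨0, show (0:ℕ) < k+3 by omega, rfl⟩, hX0D hx⟩
        · simp only [Set.mem_iUnion, Finset.mem_range] at hx
          obtain ⟨j, hjk, hxj⟩ := hx
          by_cases hcj : ComputableSet (P j)
          · have hj : Nat.nth cp (Nat.count cp j) = j := Nat.nth_count (p := cp) hcj
            have hle : Nat.count cp j ≤ j := by
              have h0 : Nat.count cp j ≤ Nat.nth cp (Nat.count cp j) :=
                (Nat.nth_strictMono hCinf).le_apply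
              omega
            refine ⟨R (Nat.count cp j), Or.inr ⟨Nat.count cp j, show Nat.count cp j < k+1 by omega, rfl⟩, ?_⟩
            show x ∈ P (Nat.nth cp (Nat.count cp j))
            rw [hj]; exact hxj
          · have hj : Nat.nth NC (Nat.count NC j) = j := Nat.nth_count (p := NC) hcj
            have hle : Nat.count NC j ≤ j := by
              have h0 : Nat.count NC j ≤ Nat.nth NC (Nat.count NC j) :=
                (Nat.nth_strictMono hNCinf).le_apply
              omega
            have hxN : x ∈ N (Nat.count NC j) := by
              show x ∈ P (Nat.nth NC (Nat.count NC j))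
              rw [hj]; exact hxj
            have := hND _ hxN
            simp only [Set.mem_iUnion, Finset.mem_range] at this
            obtain ⟨i, hit, hxi⟩ := this
            exact ⟨D i, Or.inl ⟨i, show i < k+3 by omega, rfl⟩, hxi⟩
    · refine ⟨D, R, rfl, ?_, ?_, ?_, ?_, hDdis, ?_, hRdis⟩
      · exact pairwise_disjoint_injective hDdis (fun i => ((hD i).2.2.1).nonempty)
      · exact pairwise_disjoint_injective hRdis (fun c => (hPinf _).nonempty)
      · exact fun i j h => (hD i).2.1 (h ▸ hCnth j)
      · exact fun i => ⟨(hD i).1, (hD i).2.1⟩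
      · exact fun c => ⟨hCnth c, hPinf _⟩
  · -- Type 6
    rw [Set.not_infinite] at hCinf
    set S := X0 ∪ ⋃ j ∈ hCinf.toFinset, P j with hSdef
    have hSce : CESet S := ceSet_union hX0ce (ceSet_biUnion _ (fun i _ => hPce i))
    have hSA : Disjoint S A := by
      rw [Set.disjoint_union_left]
      exact ⟨hX0A, biUnion_disjoint _ (fun i => hPA i)⟩
    set N := fun t => P (Nat.nth NC t) with hNdef
    have hN : ∀ t, CESet (N t) ∧ ¬ ComputableSet (N t) ∧ Disjoint (N t) A :=
      fun t => ⟨hPce _, hNCnth t, hPA _⟩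
    have hNS : ∀ t, Disjoint (N t) S := by
      intro t
      rw [hSdef, Set.disjoint_union_right]
      refine ⟨hPX0 _, ?_⟩
      rw [Set.disjoint_left]
      intro a ha haU
      simp only [Set.mem_iUnion] at haU
      obtain ⟨j, hjmem, haj⟩ := haU
      have hcj : cp j := (Set.Finite.mem_toFinset hCinf).1 hjmem
      have hne : Nat.nth NC t ≠ j := fun h => (hNCnth t) (h ▸ hcj)
      exact (hPdis hne).le_bot ⟨ha, haj⟩
    obtain ⟨D, hD, hDdis, hSD, hND⟩ := absorbCore hSce hSA N hN hNdis hNS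
    refine ⟨Set.range D, ⟨Set.countable_range D, ?_, ?_, ?_⟩, Or.inl ?_⟩
    · rintro X ⟨i, rfl⟩; exact (hD i).1
    · rintro X ⟨i, rfl⟩; exact (hD i).2.2.2
    · intro Dd hDce hDA
      obtain ⟨k, rfl⟩ := he2 Dd hDce hDA
      refine ⟨D '' {i | i < k + 3}, ?_, (Set.finite_Iio _).image D, ?_⟩
      · rintro X ⟨i, -, rfl⟩; exact Set.mem_range_self i
      · refine sstar_mono (hcov k) ?_
        intro x hx
        rw [Set.mem_sUnion]
        rcases hx with hx | hx
        · exact ⟨D 0, ⟨0, show (0:ℕ) < k+3 by omega, rfl⟩, hSD (Or.inl hx)⟩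
        · simp only [Set.mem_iUnion, Finset.mem_range] at hx
          obtain ⟨j, hjk, hxj⟩ := hx
          by_cases hcj : ComputableSet (P j)
          · refine ⟨D 0, ⟨0, show (0:ℕ) < k+3 by omega, rfl⟩, hSD (Or.inr ?_)⟩
            simp only [Set.mem_iUnion]
            exact ⟨j, (Set.Finite.mem_toFinset hCinf).2 hcj, hxj⟩
          · have hj : Nat.nth NC (Nat.count NC j) = j := Nat.nth_count (p := NC) hcj
            have hle : Nat.count NC j ≤ j := by
              have h0 : Nat.count NC j ≤ Nat.nth NC (Nat.count NC j) :=
                (Nat.nth_strictMono hNCinf).le_apply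
              omega
            have hxN : x ∈ N (Nat.count NC j) := by
              show x ∈ P (Nat.nth NC (Nat.count NC j))
              rw [hj]; exact hxj
            have := hND _ hxN
            simp only [Set.mem_iUnion, Finset.mem_range] at this
            obtain ⟨i, hit, hxi⟩ := this
            exact ⟨D i, ⟨i, show i < k+3 by omega, rfl⟩, hxi⟩
    · refine ⟨D, rfl, ?_, ?_, hDdis⟩
      · exact pairwise_disjoint_injective hDdis (fun i => ((hD i).2.2.1).nonempty)
      · exact fun i => ⟨(hD i).1, (hD i).2.1, (hD i).2.2.1⟩


theorem compcover_disjoint_pieces {A X : Set ℕ} (e : ℕ → Set ℕ)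
    (he1 : ∀ k, CESet (e k) ∧ Disjoint (e k) A) (hcc : CompCover A X) :
    ∃ R : ℕ → Set ℕ, (∀ k, ComputableSet (R k) ∧ Disjoint (R k) A) ∧
      Pairwise (Function.onFun Disjoint R) ∧
      ∀ k, SubsetStar (e k) (X ∪ ⋃ j ∈ Finset.range (k+1), R j) := by
  classical
  have hW : ∀ k, ∃ Z, CESet Z ∧ Disjoint Z A ∧ ComputableSet Z ∧ SubsetStar (e k) (X ∪ Z) :=
    fun k => hcc (e k) (he1 k).1 (he1 k).2
  choose W hW1 hW2 hW3 hW4 using hW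
  set R := fun k => W k \ ⋃ j ∈ Finset.range k, W j with hRdef
  have hRsubW : ∀ k, R k ⊆ W k := fun k => Set.diff_subset
  refine ⟨R, fun k => ⟨compSet_diff (hW3 k) (compSet_biUnion _ fun j _ => hW3 j),
    Set.disjoint_of_subset_left (hRsubW k) (hW2 k)⟩, ?_, ?_⟩
  · have key : ∀ i j, i < j → Disjoint (R i) (R j) := by
      intro i j hij
      rw [Set.disjoint_left]
      intro a hai haj
      refine haj.2 ?_
      simp only [Set.mem_iUnion, Finset.mem_range]
      exact ⟨i, hij, hRsubW i hai⟩
    intro i j hij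
    rcases lt_or_gt_of_ne hij with h | h
    · exact key i j h
    · exact (key j i h).symm
  · intro k
    have heq : (⋃ j ∈ Finset.range (k+1), R j) = ⋃ j ∈ Finset.range (k+1), W j :=
      partial_biUnion_eq W k
    rw [heq]
    refine sstar_mono (hW4 k) (Set.union_subset_union_right X ?_)
    intro x hx
    simp only [Set.mem_iUnion, Finset.mem_range]
    exact ⟨k, by omega, hx⟩

theorem typeFour {A X : Set ℕ} (e : ℕ → Set ℕ)
    (he1 : ∀ k, CESet (e k) ∧ Disjoint (e k) A)
    (he2 : ∀ D, CESet D → Disjoint D A → ∃ k, e k = D)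
    (hnomax : ∀ M, CESet M → Disjoint M A → ∃ D, CESet D ∧ Disjoint D A ∧ ¬ SubsetStar D M)
    (hXce : CESet X) (hXA : Disjoint X A) (hXcomp : ComputableSet X)
    (hcc : CompCover A X) :
    ∃ G, Generates A G ∧ GenTypeN 4 G := by
  classical
  have hcc' : CompCover A ∅ := by
    intro Y hYce hYA
    obtain ⟨Z, hZce, hZA, hZcomp, hZ⟩ := hcc Y hYce hYA
    refine ⟨X ∪ Z, ceSet_union hXce hZce, ?_, compSet_union hXcomp hZcomp, ?_⟩
    · rw [Set.disjoint_union_left]; exact ⟨hXA, hZA⟩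
    · exact sstar_mono hZ (by intro x hx; exact Or.inr hx)
  obtain ⟨R, hR, hRdis, hRcov⟩ := compcover_disjoint_pieces e he1 hcc'
  have hRcov' : ∀ k, SubsetStar (e k) (∅ ∪ ⋃ j ∈ Finset.range (k+1), R j) := hRcov
  have hI : {i | (R i).Infinite}.Infinite :=
    many_infinite e he2 hnomax R (fun k => ⟨ceSet_of_comp (hR k).1, (hR k).2⟩)
      ceSet_empty (Set.empty_disjoint A) hRcov'
  obtain ⟨P, hPinf, hPdis, hPfin, -, hPcov⟩ := clean R hRdis hI
  have hPcomp : ∀ j, ComputableSet (P j) := fun j => by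
    obtain ⟨s, hs⟩ := hPfin j; rw [hs]; exact compSet_biUnion _ (fun i _ => (hR i).1)
  have hPA : ∀ j, Disjoint (P j) A := fun j => by
    obtain ⟨s, hs⟩ := hPfin j; rw [hs]; exact biUnion_disjoint _ (fun i => (hR i).2)
  have hcov : ∀ k, SubsetStar (e k) (⋃ j ∈ Finset.range (k+1), P j) := by
    intro k
    have := sstar_mono (hRcov k) (Set.union_subset_union_right ∅ (hPcov k))
    refine sstar_mono this ?_
    intro x hx
    rcases hx with hx | hx
    · exact absurd hx (Set.notMem_empty x)
    · exact hx
  refine ⟨Set.range P, ⟨Set.countable_range P, ?_, ?_, ?_⟩, ?_⟩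
  · rintro Y ⟨j, rfl⟩; exact ceSet_of_comp (hPcomp j)
  · rintro Y ⟨j, rfl⟩; exact hPA j
  · intro Dd hDce hDA
    obtain ⟨k, rfl⟩ := he2 Dd hDce hDA
    refine ⟨P '' {j | j < k + 1}, ?_, (Set.finite_Iio _).image P, ?_⟩
    · rintro Y ⟨j, -, rfl⟩; exact Set.mem_range_self j
    · refine sstar_mono (hcov k) ?_
      intro x hx
      simp only [Set.mem_iUnion, Finset.mem_range] at hx
      obtain ⟨j, hjk, hxj⟩ := hx
      exact ⟨P j, ⟨j, hjk, rfl⟩, hxj⟩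
  · exact ⟨P, rfl, pairwise_disjoint_injective hPdis (fun j => (hPinf j).nonempty),
      fun j => ⟨hPcomp j, hPinf j⟩, hPdis⟩


theorem typesFiveSeven {A X : Set ℕ} (e : ℕ → Set ℕ)
    (he1 : ∀ k, CESet (e k) ∧ Disjoint (e k) A)
    (he2 : ∀ D, CESet D → Disjoint D A → ∃ k, e k = D)
    (hnomax : ∀ M, CESet M → Disjoint M A → ∃ D, CESet D ∧ Disjoint D A ∧ ¬ SubsetStar D M)
    (hXce : CESet X) (hXA : Disjoint X A) (hcc : CompCover A X)
    (hnca : ∀ X', CESet X' → Disjoint X' A → ComputableSet X' → ¬ CompCover A X') :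
    ∃ G, Generates A G ∧ (GenTypeN 5 G ∨ GenTypeN 7 G) := by
  classical
  have hXnc : ¬ ComputableSet X := fun h => hnca X hXce hXA h hcc
  obtain ⟨R, hR, hRdis, hRcov⟩ := compcover_disjoint_pieces e he1 hcc
  have hI : {i | (R i).Infinite}.Infinite :=
    many_infinite e he2 hnomax R (fun k => ⟨ceSet_of_comp (hR k).1, (hR k).2⟩) hXce hXA hRcov
  obtain ⟨P, hPinf, hPdis, hPfin, -, hPcov⟩ := clean R hRdis hI
  have hPcomp : ∀ j, ComputableSet (P j) := fun j => by
    obtain ⟨s, hs⟩ := hPfin j; rw [hs]; exact compSet_biUnion _ (fun i _ => (hR i).1)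
  have hPA : ∀ j, Disjoint (P j) A := fun j => by
    obtain ⟨s, hs⟩ := hPfin j; rw [hs]; exact biUnion_disjoint _ (fun i => (hR i).2)
  have hcov : ∀ k, SubsetStar (e k) (X ∪ ⋃ j ∈ Finset.range (k+1), P j) := fun k =>
    sstar_mono (hRcov k) (Set.union_subset_union_right X (hPcov k))
  have hXnePj : ∀ j, X ≠ P j := fun j h => hXnc (h ▸ hPcomp j)
  by_cases hmeets : {j | (X ∩ P j).Nonempty}.Infinite
  · -- Type 7
    refine ⟨insert X (Set.range P), ⟨?_, ?_, ?_, ?_⟩, Or.inr ?_⟩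
    · exact (Set.countable_range P).insert X
    · rintro Y (rfl | ⟨j, rfl⟩)
      · exact hXce
      · exact ceSet_of_comp (hPcomp j)
    · rintro Y (rfl | ⟨j, rfl⟩)
      · exact hXA
      · exact hPA j
    · intro Dd hDce hDA
      obtain ⟨k, rfl⟩ := he2 Dd hDce hDA
      refine ⟨insert X (P '' {j | j < k + 1}), ?_, ?_, ?_⟩
      · rintro Y (rfl | ⟨j, -, rfl⟩)
        · exact Set.mem_insert _ _
        · exact Set.mem_insert_of_mem _ (Set.mem_range_self j)
      · exact (((Set.finite_Iio _).image P).insert X)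
      · refine sstar_mono (hcov k) ?_
        intro x hx
        rw [Set.mem_sUnion]
        rcases hx with hx | hx
        · exact ⟨X, Set.mem_insert _ _, hx⟩
        · simp only [Set.mem_iUnion, Finset.mem_range] at hx
          obtain ⟨j, hjk, hxj⟩ := hx
          exact ⟨P j, Set.mem_insert_of_mem _ ⟨j, hjk, rfl⟩, hxj⟩
    · refine ⟨X, P, rfl, hXce, hXnc,
        pairwise_disjoint_injective hPdis (fun j => (hPinf j).nonempty), hXnePj,
        fun j => ⟨hPcomp j, hPinf j⟩, hPdis, hmeets⟩
  · -- Type 5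
    rw [Set.not_infinite] at hmeets
    set D0 := X ∪ ⋃ j ∈ hmeets.toFinset, P j with hD0def
    have hD0ce : CESet D0 := ceSet_union hXce (ceSet_biUnion _ (fun i _ => ceSet_of_comp (hPcomp i)))
    have hD0A : Disjoint D0 A := by
      rw [Set.disjoint_union_left]
      exact ⟨hXA, biUnion_disjoint _ (fun i => hPA i)⟩
    have hD0nc : ¬ ComputableSet D0 := by
      intro h
      refine hnca D0 hD0ce hD0A h ?_
      intro Y hYce hYA
      obtain ⟨k, rfl⟩ := he2 Y hYce hYA
      refine ⟨⋃ j ∈ Finset.range (k+1), P j,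
        ceSet_biUnion _ (fun i _ => ceSet_of_comp (hPcomp i)),
        biUnion_disjoint _ (fun i => hPA i),
        compSet_biUnion _ (fun i _ => hPcomp i), ?_⟩
      refine sstar_mono (hcov k) ?_
      intro x hx
      rcases hx with hx | hx
      · exact Or.inl (Or.inl hx)
      · exact Or.inr hx
    set gp := fun j => ¬ (X ∩ P j).Nonempty with hgpdef
    have hgpinf : (setOf gp).Infinite := by
      have : setOf gp = {j | (X ∩ P j).Nonempty}ᶜ := by
        ext j; simp [hgpdef]; exact Iff.rfl
      rw [this]
      exact Set.Finite.infinite_compl hmeets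
    have hgpnth : ∀ c, gp (Nat.nth gp c) := fun c => Nat.nth_mem_of_infinite hgpinf c
    set R' := fun c => P (Nat.nth gp c) with hR'def
    have hR'dis : Pairwise (Function.onFun Disjoint R') :=
      fun i j hij => hPdis ((Nat.nth_injective hgpinf).ne hij)
    have hD0R' : ∀ c, Disjoint D0 (R' c) := by
      intro c
      rw [hD0def, Set.disjoint_union_left]
      constructor
      · have := hgpnth c
        rw [hgpdef] at this
        rw [Set.not_nonempty_iff_eq_empty] at this
        exact Set.disjoint_iff_inter_eq_empty.2 this
      · rw [Set.disjoint_left]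
        intro a ha haR
        simp only [Set.mem_iUnion] at ha
        obtain ⟨i, himem, hai⟩ := ha
        have himeets : (X ∩ P i).Nonempty := (Set.Finite.mem_toFinset hmeets).1 himem
        have hne : i ≠ Nat.nth gp c := by
          intro h
          exact (hgpnth c) (h ▸ himeets)
        exact (hPdis hne).le_bot ⟨hai, haR⟩
    refine ⟨insert D0 (Set.range R'), ⟨?_, ?_, ?_, ?_⟩, Or.inl ?_⟩
    · exact (Set.countable_range R').insert D0
    · rintro Y (rfl | ⟨c, rfl⟩)
      · exact hD0ce
      · exact ceSet_of_comp (hPcomp _)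
    · rintro Y (rfl | ⟨c, rfl⟩)
      · exact hD0A
      · exact hPA _
    · intro Dd hDce hDA
      obtain ⟨k, rfl⟩ := he2 Dd hDce hDA
      refine ⟨insert D0 (R' '' {c | c < k + 1}), ?_, ?_, ?_⟩
      · rintro Y (rfl | ⟨c, -, rfl⟩)
        · exact Set.mem_insert _ _
        · exact Set.mem_insert_of_mem _ (Set.mem_range_self c)
      · exact (((Set.finite_Iio _).image R').insert D0)
      · refine sstar_mono (hcov k) ?_
        intro x hx
        rw [Set.mem_sUnion]
        rcases hx with hx | hx
        · exact ⟨D0, Set.mem_insert _ _, Or.inl hx⟩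
        · simp only [Set.mem_iUnion, Finset.mem_range] at hx
          obtain ⟨j, hjk, hxj⟩ := hx
          by_cases hmj : (X ∩ P j).Nonempty
          · refine ⟨D0, Set.mem_insert _ _, Or.inr ?_⟩
            simp only [Set.mem_iUnion]
            exact ⟨j, (Set.Finite.mem_toFinset hmeets).2 hmj, hxj⟩
          · have hj : Nat.nth gp (Nat.count gp j) = j := Nat.nth_count (p := gp) hmj
            have hle : Nat.count gp j ≤ j := by
              have h0 : Nat.count gp j ≤ Nat.nth gp (Nat.count gp j) :=
                (Nat.nth_strictMono hgpinf).le_apply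
              omega
            refine ⟨R' (Nat.count gp j),
              Set.mem_insert_of_mem _ ⟨Nat.count gp j, show Nat.count gp j < k+1 by omega, rfl⟩, ?_⟩
            show x ∈ P (Nat.nth gp (Nat.count gp j))
            rw [hj]; exact hxj
    · refine ⟨D0, R', rfl, hD0ce, hD0nc, nonComp_infinite hD0nc,
        pairwise_disjoint_injective hR'dis (fun c => (hPinf _).nonempty),
        fun c h => hD0nc (h ▸ hPcomp _),
        fun c => ⟨hPcomp _, hPinf _⟩, hR'dis, hD0R'⟩

theorem stmt_6 (A : Set ℕ) (hA : CESet A) :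
    ∃ (G : Set (Set ℕ)) (n : ℕ), 1 ≤ n ∧ n ≤ 10 ∧ Generates A G ∧ GenTypeN n G := by
  classical
  obtain ⟨e, he1, he2⟩ := exists_enum A
  by_cases h2 : ∃ M, (CESet M ∧ Disjoint M A) ∧ ∀ D, CESet D → Disjoint D A → SubsetStar D M
  · obtain ⟨M, ⟨hMce, hMA⟩, hmax⟩ := h2
    by_cases hMfin : M.Finite
    · -- Type 1
      refine ⟨{∅}, 1, le_refl 1, by omega, ⟨Set.countable_singleton _, ?_, ?_, ?_⟩, rfl⟩
      · rintro Y hY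
        rw [Set.mem_singleton_iff] at hY
        subst hY
        exact ceSet_empty
      · rintro Y hY
        rw [Set.mem_singleton_iff] at hY
        subst hY
        exact Set.empty_disjoint A
      · intro D hDce hDA
        refine ⟨∅, Set.empty_subset _, Set.finite_empty, ?_⟩
        have hDfin : D.Finite := by
          refine Set.Finite.subset (Set.Finite.union (hmax D hDce hDA) hMfin) ?_
          intro a ha
          by_cases hm : a ∈ M
          · exact Or.inr hm
          · exact Or.inl ⟨ha, hm⟩
        refine Set.Finite.subset hDfin ?_
        intro a ha
        exact ha.1
    · have hGen : Generates A {M} := by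
        refine ⟨Set.countable_singleton _, ?_, ?_, ?_⟩
        · rintro Y hY
          rw [Set.mem_singleton_iff] at hY
          subst hY
          exact hMce
        · rintro Y hY
          rw [Set.mem_singleton_iff] at hY
          subst hY
          exact hMA
        · intro D hDce hDA
          refine ⟨{M}, le_refl _, Set.finite_singleton _, ?_⟩
          rw [Set.sUnion_singleton]
          exact hmax D hDce hDA
      by_cases hMcomp : ComputableSet M
      · exact ⟨{M}, 2, by omega, by omega, hGen, ⟨M, rfl, hMcomp, hMfin⟩⟩
      · exact ⟨{M}, 3, by omega, by omega, hGen, ⟨M, rfl, hMce, hMcomp, hMfin⟩⟩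
  · push_neg at h2
    have hnomax : ∀ M, CESet M → Disjoint M A → ∃ D, CESet D ∧ Disjoint D A ∧ ¬ SubsetStar D M := by
      intro M hMce hMA
      exact h2 M ⟨hMce, hMA⟩
    by_cases h3a : ∃ X, CESet X ∧ Disjoint X A ∧ ComputableSet X ∧ CompCover A X
    · obtain ⟨X, hXce, hXA, hXcomp, hcc⟩ := h3a
      obtain ⟨G, hGen, hT⟩ := typeFour e he1 he2 hnomax hXce hXA hXcomp hcc
      exact ⟨G, 4, by omega, by omega, hGen, hT⟩
    · push_neg at h3a
      have hnca : ∀ X', CESet X' → Disjoint X' A → ComputableSet X' → ¬ CompCover A X' := by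
        intro X' h1 h2' h3'
        exact h3a X' h1 h2' h3'
      by_cases h3 : ∃ X, CESet X ∧ Disjoint X A ∧ CompCover A X
      · obtain ⟨X, hXce, hXA, hcc⟩ := h3
        obtain ⟨G, hGen, hT⟩ := typesFiveSeven e he1 he2 hnomax hXce hXA hcc hnca
        rcases hT with hT | hT
        · exact ⟨G, 5, by omega, by omega, hGen, hT⟩
        · exact ⟨G, 7, by omega, by omega, hGen, hT⟩
      · push_neg at h3
        have hns1 : ∀ X, CESet X → Disjoint X A → ¬ CompCover A X := by
          intro X h1 h2'
          exact h3 X h1 h2'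
        by_cases h4 : PieceFam A e
        · obtain ⟨G, hGen, hT⟩ := typesSixEight e he1 he2 hnomax hns1 h4
          rcases hT with hT | hT
          · exact ⟨G, 6, by omega, by omega, hGen, hT⟩
          · exact ⟨G, 8, by omega, by omega, hGen, hT⟩
        · obtain ⟨D, hD, hDnest, hDdiff, hDcov⟩ := typeTenChain e he1 h4
          refine ⟨Set.range D, 10, by omega, by omega, ⟨Set.countable_range D, ?_, ?_, ?_⟩, ?_⟩
          · rintro Y ⟨i, rfl⟩; exact (hD i).1
          · rintro Y ⟨i, rfl⟩; exact (hD i).2.1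
          · intro Dd hDce hDA
            obtain ⟨k, rfl⟩ := he2 Dd hDce hDA
            refine ⟨{D k}, ?_, Set.finite_singleton _, ?_⟩
            · rintro Y hY
              rw [Set.mem_singleton_iff] at hY
              subst hY
              exact Set.mem_range_self k
            · rw [Set.sUnion_singleton]
              exact sstar_of_subset (hDcov k)
          · exact ⟨D, rfl, fun i => ⟨(hD i).1, (hD i).2.2.1, (hD i).2.2.2⟩, hDnest, hDdiff⟩
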